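/- Let S be a ℤ-graded commutative ring, S̄ ⊆ S a graded subring, and K ⊆ S a homogeneous ideal such that S = K ⊕ S̄ as graded abelian groups. Let J ⊆ S be a homogeneous ideal containing K, so that J = K ⊕ J̄ where J̄ = J ∩ S̄ is a homogeneous ideal of S̄. Fix an integer n; let S′ ⊆ S be the subring generated by the elements of S of degree ≤ n, let J′ ⊆ S′ be the ideal of S′ generated by elements of J of degree ≤ n, and define S̄′ ⊆ S̄ and J̄′ ⊆ S̄′ analogously. Then the natural ring homomorphism S′/J′ → S̄′/J̄′ is an isomorphism. -/
import Mathlib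


theorem stmt3_aux {R₁ R₂ : Type*} [CommRing R₁] [CommRing R₂] (Φ : R₁ →+* R₂) (Ψ : R₂ →+* R₁)
    (h1 : ∀ q, Ψ (Φ q) = q) (h2 : ∀ q, Φ (Ψ q) = q) : ∃ e : R₁ ≃+* R₂, ∀ x, e x = Φ x :=
  ⟨⟨⟨Φ, Ψ, h1, h2⟩, map_mul Φ, map_add Φ⟩, fun _ => rfl⟩

/-- Let `S` be a `ℤ`-graded commutative ring, `S̄ ⊆ S` a graded subring
(`Sb` below) and `K ⊆ S` a homogeneous ideal with `S = K ⊕ S̄` as graded abelian groups.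
Let `J ⊆ S` be a homogeneous ideal containing `K` (so `J = K ⊕ J̄` with `J̄ = J ∩ S̄`).
Fix `n : ℤ`; let `S′` be the subring of `S` generated by the elements of degree `≤ n`
(i.e. those all of whose homogeneous components of degree `> n` vanish), `J′ ⊆ S′` the
ideal generated by the elements of `J` of degree `≤ n`, and define `S̄′ ⊆ S̄`, `J̄′ ⊆ S̄′`
analogously.  Then the natural ring map `S′/J′ → S̄′/J̄′` (induced by the projection
`S = K ⊕ S̄ → S̄`) is an isomorphism; equivalently — as formalized here — there is a ring
isomorphism `e : S′/J′ ≃ S̄′/J̄′` whose inverse is induced by the inclusion `S̄′ ⊆ S′`. -/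
theorem stmt3 {S : Type*} [CommRing S] (𝒜 : ℤ → AddSubgroup S) [GradedRing 𝒜]
    (Sb : Subring S)
    (hSbGraded : ∀ x ∈ Sb, ∀ m : ℤ, ((DirectSum.decompose 𝒜 x m : 𝒜 m) : S) ∈ Sb)
    (K : Ideal S) (hKhom : Ideal.IsHomogeneous 𝒜 K)
    (hdisj : Disjoint (K.toAddSubgroup) Sb.toAddSubgroup)
    (hdecomp : ∀ s : S, ∃ x ∈ K, ∃ y ∈ Sb, s = x + y)
    (J : Ideal S) (hJhom : Ideal.IsHomogeneous 𝒜 J) (hKJ : K ≤ J)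
    (n : ℤ)
    (S' : Subring S)
    (hS' : S' = Subring.closure
      {x : S | ∀ m : ℤ, n < m → ((DirectSum.decompose 𝒜 x m : 𝒜 m) : S) = 0})
    (Sb' : Subring S)
    (hSb' : Sb' = Subring.closure
      {x : S | x ∈ Sb ∧ ∀ m : ℤ, n < m → ((DirectSum.decompose 𝒜 x m : 𝒜 m) : S) = 0})
    (J' : Ideal S')
    (hJ' : J' = Ideal.span
      {x : S' | (x : S) ∈ J ∧ ∀ m : ℤ, n < m →
        ((DirectSum.decompose 𝒜 (x : S) m : 𝒜 m) : S) = 0})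
    (Jb' : Ideal Sb')
    (hJb' : Jb' = Ideal.span
      {x : Sb' | (x : S) ∈ J ∧ ∀ m : ℤ, n < m →
        ((DirectSum.decompose 𝒜 (x : S) m : 𝒜 m) : S) = 0}) :
    ∃ e : (S' ⧸ J') ≃+* (Sb' ⧸ Jb'),
      ∀ x : Sb',
        e (Ideal.Quotient.mk J' (Subring.inclusion
            (by rw [hS', hSb']; exact Subring.closure_mono fun y hy => hy.2) x)) =
          Ideal.Quotient.mk Jb' x := by
  classical
  -- uniqueness of the decomposition
  have huniq : ∀ x ∈ K, ∀ y ∈ Sb, x + y = 0 → x = 0 ∧ y = 0 := by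
    intro x hx y hy h
    have hxy : x = -y := eq_neg_of_add_eq_zero_left h
    have hxSb : x ∈ Sb := hxy ▸ Sb.toAddSubgroup.neg_mem hy
    have hx0 : x = 0 := (AddSubgroup.disjoint_def.mp hdisj) hx hxSb
    exact ⟨hx0, by rw [hx0, zero_add] at h; exact h⟩
  choose xk hxk π hπSb hsum using hdecomp
  have hπuniq : ∀ s x', x' ∈ K → ∀ y', y' ∈ Sb → s = x' + y' → π s = y' := by
    intro s x' hx' y' hy' h
    have h0 : (xk s - x') + (π s - y') = 0 := by linear_combination (hsum s).symm + h
    have := huniq _ (K.sub_mem (hxk s) hx') _ (Sb.toAddSubgroup.sub_mem (hπSb s) hy') h0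
    exact sub_eq_zero.mp this.2
  have hπ1 : π 1 = 1 := hπuniq 1 0 K.zero_mem 1 Sb.one_mem (by ring)
  have hπ0 : π 0 = 0 := hπuniq 0 0 K.zero_mem 0 Sb.zero_mem (by ring)
  have hπadd : ∀ s t, π (s + t) = π s + π t := fun s t =>
    hπuniq _ (xk s + xk t) (K.add_mem (hxk s) (hxk t)) _
      (Sb.add_mem (hπSb s) (hπSb t)) (by linear_combination hsum s + hsum t)
  have hπneg : ∀ s, π (-s) = -π s := fun s =>
    hπuniq _ (-xk s) (K.neg_mem (hxk s)) _ (Sb.neg_mem (hπSb s))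
      (by linear_combination -hsum s)
  have hπmul : ∀ s t, π (s * t) = π s * π t := fun s t =>
    hπuniq _ (xk s * t + π s * xk t)
      (K.add_mem (K.mul_mem_right _ (hxk s)) (K.mul_mem_left _ (hxk t))) _
      (Sb.mul_mem (hπSb s) (hπSb t)) (by linear_combination t * hsum s + π s * hsum t)
  have hπfix : ∀ z ∈ Sb, π z = z := fun z hz => hπuniq z 0 K.zero_mem z hz (by ring)
  have hsK : ∀ s, s - π s ∈ K := fun s => by
    have : s - π s = xk s := by linear_combination hsum s
    rw [this]; exact hxk s
  have hDsplit : ∀ s, (∀ m : ℤ, n < m → ((DirectSum.decompose 𝒜 s m : 𝒜 m) : S) = 0) →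
      (∀ m : ℤ, n < m → ((DirectSum.decompose 𝒜 (π s) m : 𝒜 m) : S) = 0) ∧
      (∀ m : ℤ, n < m → ((DirectSum.decompose 𝒜 (s - π s) m : 𝒜 m) : S) = 0) := by
    intro s hs
    have key : ∀ m : ℤ, n < m → ((DirectSum.decompose 𝒜 (s - π s) m : 𝒜 m) : S) = 0 ∧
        ((DirectSum.decompose 𝒜 (π s) m : 𝒜 m) : S) = 0 := by
      intro m hm
      have hadd : ((DirectSum.decompose 𝒜 (s - π s) m : 𝒜 m) : S)
          + ((DirectSum.decompose 𝒜 (π s) m : 𝒜 m) : S)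
          = ((DirectSum.decompose 𝒜 s m : 𝒜 m) : S) := by
        have : (s - π s) + π s = s := by ring
        conv_rhs => rw [← this]
        simp
      rw [hs m hm] at hadd
      exact huniq _ (hKhom m (hsK s)) _ (hSbGraded _ (hπSb s) m) hadd
    exact ⟨fun m hm => (key m hm).2, fun m hm => (key m hm).1⟩
  have hle : Sb' ≤ S' := by
    rw [hS', hSb']; exact Subring.closure_mono fun y hy => hy.2
  have hSb'le : Sb' ≤ Sb := by
    rw [hSb']; exact Subring.closure_le.mpr fun x hx => hx.1
  -- main lemma
  have hmain : ∀ s, ∀ _ : s ∈ S', π s ∈ Sb' ∧ ∃ j ∈ J', (j : S) = s - π s := by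
    intro s hs
    rw [hS'] at hs
    induction hs using Subring.closure_induction with
    | mem g hg =>
      obtain ⟨h1, h2⟩ := hDsplit g hg
      constructor
      · rw [hSb']; exact Subring.subset_closure ⟨hπSb g, h1⟩
      · have hj1 : g - π g ∈ S' := by rw [hS']; exact Subring.subset_closure h2
        refine ⟨⟨g - π g, hj1⟩, ?_, rfl⟩
        rw [hJ']; exact Ideal.subset_span ⟨hKJ (hsK g), h2⟩
    | zero => exact ⟨by rw [hπ0]; exact Sb'.zero_mem, 0, J'.zero_mem, by simp [hπ0]⟩
    | one => exact ⟨by rw [hπ1]; exact Sb'.one_mem, 0, J'.zero_mem, by simp [hπ1]⟩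
    | add a b ha hb iha ihb =>
      obtain ⟨ha1, ja, hja, hja2⟩ := iha
      obtain ⟨hb1, jb, hjb, hjb2⟩ := ihb
      refine ⟨by rw [hπadd]; exact Sb'.add_mem ha1 hb1, ja + jb, J'.add_mem hja hjb, ?_⟩
      push_cast
      rw [hja2, hjb2, hπadd]; ring
    | neg a ha iha =>
      obtain ⟨ha1, ja, hja, hja2⟩ := iha
      refine ⟨by rw [hπneg]; exact Sb'.neg_mem ha1, -ja, J'.neg_mem hja, ?_⟩
      push_cast
      rw [hja2, hπneg]; ring
    | mul a b ha hb iha ihb =>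
      obtain ⟨ha1, ja, hja, hja2⟩ := iha
      obtain ⟨hb1, jb, hjb, hjb2⟩ := ihb
      have haS' : a ∈ S' := by rw [hS']; exact ha
      refine ⟨by rw [hπmul]; exact Sb'.mul_mem ha1 hb1,
        (⟨a, haS'⟩ : S') * jb + ja * ⟨π b, hle hb1⟩,
        J'.add_mem (J'.mul_mem_left _ hjb) (J'.mul_mem_right _ hja), ?_⟩
      push_cast
      rw [hja2, hjb2, hπmul]; ring
  -- generators of Jb' land in J'
  have hcoe : ∀ w : Sb', ((Subring.inclusion hle w : S') : S) = (w : S) := fun _ => rfl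
  have hgen : ∀ z ∈ Jb', Subring.inclusion hle z ∈ J' := by
    intro z hz
    rw [hJb'] at hz
    induction hz using Submodule.span_induction with
    | mem w hw =>
      rw [hJ']
      refine Ideal.subset_span ⟨?_, ?_⟩
      · rw [Set.mem_setOf_eq] at hw; rw [hcoe w]; exact hw.1
      · rw [hcoe w]; exact hw.2
    | zero => rw [map_zero]; exact J'.zero_mem
    | add a b _ _ iha ihb => rw [map_add]; exact J'.add_mem iha ihb
    | smul r a _ iha => rw [smul_eq_mul, map_mul]; exact J'.mul_mem_left _ iha
  -- the projection as a ring hom S' →+* Sb'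
  obtain ⟨ρ, hρ⟩ : ∃ ρ : S' →+* Sb', ∀ s : S', ((ρ s : Sb') : S) = π (s : S) :=
    ⟨{ toFun := fun s => ⟨π s, (hmain s s.2).1⟩
       map_one' := Subtype.ext hπ1
       map_mul' := fun a b => Subtype.ext (hπmul a b)
       map_zero' := Subtype.ext hπ0
       map_add' := fun a b => Subtype.ext (hπadd a b) }, fun _ => rfl⟩
  have hρJ : ∀ j ∈ J', ρ j ∈ Jb' := by
    intro j hj
    rw [hJ'] at hj
    induction hj using Submodule.span_induction with
    | mem z hz =>
      rw [Set.mem_setOf_eq] at hz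
      rw [hJb']
      refine Ideal.subset_span ⟨?_, ?_⟩
      · rw [hρ z]
        have : π (z : S) = (z : S) - ((z : S) - π z) := by ring
        rw [this]; exact J.sub_mem hz.1 (hKJ (hsK z))
      · rw [hρ z]; exact (hDsplit _ hz.2).1
    | zero => rw [map_zero]; exact Jb'.zero_mem
    | add a b _ _ iha ihb => rw [map_add]; exact Jb'.add_mem iha ihb
    | smul r a _ iha => rw [smul_eq_mul, map_mul]; exact Jb'.mul_mem_left _ iha
  -- quotient maps
  obtain ⟨Φ, hΦ⟩ : ∃ Φ : (S' ⧸ J') →+* (Sb' ⧸ Jb'), ∀ s : S',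
      Φ (Ideal.Quotient.mk J' s) = Ideal.Quotient.mk Jb' (ρ s) :=
    ⟨Ideal.Quotient.lift J' ((Ideal.Quotient.mk Jb').comp ρ)
        (fun a ha => Ideal.Quotient.eq_zero_iff_mem.mpr (hρJ a ha)),
      fun s => by rw [Ideal.Quotient.lift_mk, RingHom.comp_apply]⟩
  obtain ⟨Ψ, hΨ⟩ : ∃ Ψ : (Sb' ⧸ Jb') →+* (S' ⧸ J'), ∀ z : Sb',
      Ψ (Ideal.Quotient.mk Jb' z) = Ideal.Quotient.mk J' (Subring.inclusion hle z) :=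
    ⟨Ideal.Quotient.lift Jb' ((Ideal.Quotient.mk J').comp (Subring.inclusion hle))
        (fun a ha => Ideal.Quotient.eq_zero_iff_mem.mpr (hgen a ha)),
      fun z => by rw [Ideal.Quotient.lift_mk, RingHom.comp_apply]⟩
  have hΦΨ : ∀ x : Sb', Φ (Ideal.Quotient.mk J' (Subring.inclusion hle x)) =
      Ideal.Quotient.mk Jb' x := by
    intro x
    rw [hΦ]
    have : ρ (Subring.inclusion hle x) = x := by
      ext
      rw [hρ, hcoe]
      exact hπfix _ (hSb'le x.2)
    rw [this]
  have obl1 : ∀ q : S' ⧸ J', Ψ (Φ q) = q := by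
    intro q
    obtain ⟨s, rfl⟩ := Ideal.Quotient.mk_surjective q
    rw [hΦ s, hΨ (ρ s), Ideal.Quotient.mk_eq_mk_iff_sub_mem]
    obtain ⟨-, j, hj, hj2⟩ := hmain s s.2
    have : Subring.inclusion hle (ρ s) - s = -j := by
      ext
      push_cast
      rw [hcoe (ρ s), hρ s]
      linear_combination hj2
    rw [this]; exact J'.neg_mem hj
  have obl2 : ∀ q : Sb' ⧸ Jb', Φ (Ψ q) = q := by
    intro q
    obtain ⟨z, rfl⟩ := Ideal.Quotient.mk_surjective q
    rw [hΨ z]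
    exact hΦΨ z
  obtain ⟨e, he⟩ := stmt3_aux Φ Ψ obl1 obl2
  exact ⟨e, fun x => (he _).trans (hΦΨ x)⟩
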